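/- Let s₁, s₀, r₁, r₀, a₃, a₂, a₁, a₀ ∈ ℝ. Define f(v) = (s₀v + r₀)/(a₃v³ + a₂v² + a₁v + a₀) and g(v) = (s₁v + r₁)/(a₃v³ + a₂v² + a₁v + a₀). Let E, H, y : ℝ → ℝ and x₀ ∈ ℝ, and suppose: (i) a₃·y(x₀)³ + a₂·y(x₀)² + a₁·y(x₀) + a₀ ≠ 0 and (s₁x₀ + s₀)·y(x₀) + r₁x₀ + r₀ ≠ 0; (ii) E has derivative g(y(x₀))·E(y(x₀)) at y(x₀) and H has derivative E(y(x₀))·f(y(x₀)) at y(x₀); (iii) y has derivative −(a₃·y(x₀)³ + a₂·y(x₀)² + a₁·y(x₀) + a₀)/((s₁x₀ + s₀)·y(x₀) + r₁x₀ + r₀) at x₀ (i.e. y solves the AIL equation at x₀). Then the function Φ(x) = x·E(y(x)) + H(y(x)) has derivative 0 at x₀. Thus Φ is a first integral of the AIL class equation. -/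

import Mathlib

/-- `Φ(x) = x·E(y(x)) + H(y(x))` is a first integral of the AIL class equation
`y' = −(a₃y³ + a₂y² + a₁y + a₀)/((s₁x + s₀)y + r₁x + r₀)`, where
`f(v) = (s₀v + r₀)/(a₃v³ + a₂v² + a₁v + a₀)`,
`g(v) = (s₁v + r₁)/(a₃v³ + a₂v² + a₁v + a₀)`,
`E` is an integrating factor `exp(∫g)` and `H = ∫E·f`. -/
theorem AIL_first_integral
    (s₁ s₀ r₁ r₀ a₃ a₂ a₁ a₀ : ℝ)
    (f g E H y : ℝ → ℝ) (x₀ : ℝ)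
    (hf : f = fun v => (s₀ * v + r₀) / (a₃ * v ^ 3 + a₂ * v ^ 2 + a₁ * v + a₀))
    (hg : g = fun v => (s₁ * v + r₁) / (a₃ * v ^ 3 + a₂ * v ^ 2 + a₁ * v + a₀))
    (h1 : a₃ * (y x₀) ^ 3 + a₂ * (y x₀) ^ 2 + a₁ * (y x₀) + a₀ ≠ 0)
    (h2 : (s₁ * x₀ + s₀) * (y x₀) + r₁ * x₀ + r₀ ≠ 0)
    (hE : HasDerivAt E (g (y x₀) * E (y x₀)) (y x₀))
    (hH : HasDerivAt H (E (y x₀) * f (y x₀)) (y x₀))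
    (hy : HasDerivAt y
      (-((a₃ * (y x₀) ^ 3 + a₂ * (y x₀) ^ 2 + a₁ * (y x₀) + a₀) /
        ((s₁ * x₀ + s₀) * (y x₀) + r₁ * x₀ + r₀))) x₀) :
    HasDerivAt (fun x => x * E (y x) + H (y x)) 0 x₀ := by
  set y' := -((a₃ * (y x₀) ^ 3 + a₂ * (y x₀) ^ 2 + a₁ * (y x₀) + a₀) /
      ((s₁ * x₀ + s₀) * (y x₀) + r₁ * x₀ + r₀)) with hy'
  have hEc : HasDerivAt (fun x => E (y x)) (g (y x₀) * E (y x₀) * y') x₀ := hE.comp x₀ hy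
  have hHc : HasDerivAt (fun x => H (y x)) (E (y x₀) * f (y x₀) * y') x₀ := hH.comp x₀ hy
  have h := ((hasDerivAt_id x₀).mul hEc).add hHc
  convert h using 1
  · rfl
  · rfl
  · rfl
  subst hf hg
  simp only [id, hy']
  generalize a₃ * y x₀ ^ 3 + a₂ * y x₀ ^ 2 + a₁ * y x₀ + a₀ = P at h1 ⊢
  generalize hQ : (s₁ * x₀ + s₀) * y x₀ + r₁ * x₀ + r₀ = Q at h2 ⊢
  field_simp
  rw [← hQ]
  ring
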